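/- Let α ∈ (0,1), let g : ℝ^d → ℝ^d satisfy a global Lipschitz condition with constant L > 0, let T > 0, and let f : [0,T] → ℝ^d be continuous. Then there exists a unique continuous function x : [0,T] → ℝ^d satisfying the singular Volterra integral equation x(t) = f(t) + (1/Γ(α)) ∫₀ᵗ (t−s)^{α−1} g(x(s)) ds for all t ∈ [0,T]. -/

import Mathlib

open Real MeasureTheory Set

namespace VolterraAux

variable {E : Type*} [NormedAddCommGroup E] [NormedSpace ℝ E]

lemma kernelIntegrable {a : ℝ} (ha : 0 < a) (t : ℝ) :
    IntervalIntegrable (fun s : ℝ => (t - s) ^ (a - 1)) volume 0 t := by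
  have h := (intervalIntegral.intervalIntegrable_rpow' (r := a - 1)
      (by linarith) (a := 0) (b := t)).comp_sub_left t
  simpa using h.symm

lemma smulIntegrable {a : ℝ} (ha : 0 < a) {h : ℝ → E} (hc : Continuous h)
    {M : ℝ} (hM : ∀ s, ‖h s‖ ≤ M) (t : ℝ) :
    IntervalIntegrable (fun s => ((t - s) ^ (a - 1)) • h s) volume 0 t := by
  have hk := kernelIntegrable ha t
  have hm : ∀ u : Measure ℝ, MemLp h ⊤ u := fun u =>
    memLp_top_of_bound hc.aestronglyMeasurable M (Filter.Eventually.of_forall hM)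
  exact ⟨hk.1.smul_of_top_left (hm _), hk.2.smul_of_top_left (hm _)⟩





lemma contOn {a : ℝ} (ha0 : 0 < a) (ha1 : a < 1) {h : ℝ → E} (hc : Continuous h)
    {M : ℝ} (hM : ∀ s, ‖h s‖ ≤ M) {T : ℝ} (hT : 0 < T) :
    ContinuousOn (fun t => ∫ s in (0:ℝ)..t, ((t - s) ^ (a - 1)) • h s) (Icc 0 T) := by
  have hM0 : 0 ≤ M := le_trans (norm_nonneg _) (hM 0)
  set G : ℝ → ℝ → E := fun t u =>
    Set.indicator (Ioc (0:ℝ) t) (fun u => (u ^ (a - 1)) • h (t - u)) u with hG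
  set bound : ℝ → ℝ := fun u =>
    Set.indicator (Ioc (0:ℝ) (T + 1)) (fun u => u ^ (a - 1) * M) u with hbound
  have hbound_nonneg : ∀ u, 0 ≤ bound u := by
    intro u
    apply Set.indicator_nonneg
    intro u hu
    exact mul_nonneg (Real.rpow_nonneg hu.1.le _) hM0
  have key : ContinuousOn (fun t => ∫ u, G t u) (Icc 0 T) := by
    intro t₀ ht₀
    apply continuousWithinAt_of_dominated (bound := bound)
    · filter_upwards with t
      have hker : Measurable (fun u : ℝ => u ^ (a - 1)) :=
        measurable_of_continuousOn_compl_singleton 0 (fun x hx =>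
          (Real.continuousAt_rpow_const x _ (Or.inl hx)).continuousWithinAt)
      exact ((hker.aestronglyMeasurable.smul
        ((hc.comp (continuous_const.sub continuous_id)).aestronglyMeasurable)).indicator
        measurableSet_Ioc)
    · filter_upwards [self_mem_nhdsWithin] with t ht
      filter_upwards with u
      show ‖Set.indicator (Ioc (0:ℝ) t) (fun u => (u ^ (a - 1)) • h (t - u)) u‖ ≤ bound u
      by_cases hu : u ∈ Ioc (0:ℝ) t
      · rw [Set.indicator_of_mem hu]
        have hu' : u ∈ Ioc (0:ℝ) (T + 1) := ⟨hu.1, le_trans hu.2 (by linarith [ht.2])⟩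
        have : bound u = u ^ (a - 1) * M := by
          rw [hbound]; exact Set.indicator_of_mem hu' _
        rw [this, norm_smul, Real.norm_eq_abs, abs_of_nonneg (Real.rpow_nonneg hu.1.le _)]
        exact mul_le_mul_of_nonneg_left (hM _) (Real.rpow_nonneg hu.1.le _)
      · rw [Set.indicator_of_notMem hu, norm_zero]
        exact hbound_nonneg u
    · rw [hbound, integrable_indicator_iff measurableSet_Ioc]
      have h1 : IntegrableOn (fun u : ℝ => u ^ (a - 1)) (Ioc 0 (T + 1)) := by
        have := intervalIntegral.intervalIntegrable_rpow' (r := a - 1)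
          (by linarith) (a := 0) (b := T + 1)
        rwa [intervalIntegrable_iff_integrableOn_Ioc_of_le (by linarith)] at this
      exact h1.mul_const M
    · have hne : ∀ᵐ u : ℝ, u ≠ t₀ := by
        refine (ae_iff).mpr ?_
        simpa using measure_singleton t₀ (μ := volume)
      filter_upwards [hne] with u hu
      by_cases hu0 : u ≤ 0
      · have heq : (fun t => G t u) = fun _ => 0 := by
          funext t
          exact Set.indicator_of_notMem (fun hmem => absurd hmem.1 (not_lt.mpr hu0)) _
        rw [heq]; exact continuousWithinAt_const
      push_neg at hu0
      rcases Ne.lt_or_gt hu with h1 | h1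
      · have hev : (fun t => (u ^ (a - 1)) • h (t - u)) =ᶠ[nhds t₀] (fun t => G t u) := by
          filter_upwards [(isOpen_Ioi (a := u)).eventually_mem (Set.mem_Ioi.mpr h1)] with t ht
          exact (Set.indicator_of_mem (Set.mem_Ioc.mpr ⟨hu0, (Set.mem_Ioi.mp ht).le⟩)
            (fun u => (u ^ (a - 1)) • h (t - u))).symm
        have hcont : ContinuousAt (fun t => (u ^ (a - 1)) • h (t - u)) t₀ :=
          (continuous_const.smul (hc.comp (continuous_id.sub continuous_const))).continuousAt
        exact (hcont.congr hev).continuousWithinAt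
      · have hev : (fun _ : ℝ => (0 : E)) =ᶠ[nhds t₀] (fun t => G t u) := by
          filter_upwards [(isOpen_Iio (a := u)).eventually_mem (Set.mem_Iio.mpr h1)] with t ht
          exact (Set.indicator_of_notMem
            (fun hmem => absurd hmem.2 (not_le.mpr (Set.mem_Iio.mp ht)))
            (fun u => (u ^ (a - 1)) • h (t - u))).symm
        exact (continuousAt_const.congr hev).continuousWithinAt
  apply key.congr
  intro t ht
  dsimp only
  have h1 : (∫ s in (0:ℝ)..t, ((t - s) ^ (a - 1)) • h s)
      = ∫ u in (0:ℝ)..t, (u ^ (a - 1)) • h (t - u) := by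
    have h2 := intervalIntegral.integral_comp_sub_left (a := 0) (b := t)
      (fun u => (u ^ (a - 1)) • h (t - u)) t
    simp only [sub_self, sub_zero] at h2
    rw [← h2]
    apply intervalIntegral.integral_congr
    intro s _
    simp [sub_sub_cancel]
  rw [h1, intervalIntegral.integral_of_le ht.1, ← integral_indicator measurableSet_Ioc]



lemma expIntegrableOn {a lam : ℝ} (ha0 : 0 < a) (hlam : 0 < lam) :
    IntegrableOn (fun u : ℝ => u ^ (a - 1) * Real.exp (-(lam * u))) (Ioi 0) := by
  have h := integrableOn_rpow_mul_exp_neg_mul_rpow (s := a - 1) (p := 1) (b := lam)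
    (by linarith) zero_lt_one hlam
  apply h.congr_fun ?_ measurableSet_Ioi
  intro x hx
  simp only [Real.rpow_one]
  ring_nf

lemma expIntegralValue {a lam : ℝ} (ha0 : 0 < a) (hlam : 0 < lam) :
    ∫ u in Ioi (0:ℝ), u ^ (a - 1) * Real.exp (-(lam * u)) = Real.Gamma a / lam ^ a := by
  rw [Real.integral_rpow_mul_exp_neg_mul_Ioi ha0 hlam]
  rw [one_div, Real.inv_rpow hlam.le, div_eq_mul_inv, mul_comm]

lemma gammaBound {a lam : ℝ} (ha0 : 0 < a) (hlam : 0 < lam) {t : ℝ} (ht : 0 ≤ t) :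
    ∫ s in (0:ℝ)..t, (t - s) ^ (a - 1) * Real.exp (lam * s)
      ≤ Real.exp (lam * t) * (Real.Gamma a / lam ^ a) := by
  have h1 : (∫ s in (0:ℝ)..t, (t - s) ^ (a - 1) * Real.exp (lam * s))
      = ∫ u in (0:ℝ)..t, u ^ (a - 1) * Real.exp (lam * (t - u)) := by
    have h2 := intervalIntegral.integral_comp_sub_left (a := 0) (b := t)
      (fun u => u ^ (a - 1) * Real.exp (lam * (t - u))) t
    simp only [sub_self, sub_zero] at h2
    rw [← h2]
    apply intervalIntegral.integral_congr
    intro s _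
    simp [sub_sub_cancel]
  have h3 : (∫ u in (0:ℝ)..t, u ^ (a - 1) * Real.exp (lam * (t - u)))
      = Real.exp (lam * t) * ∫ u in (0:ℝ)..t, u ^ (a - 1) * Real.exp (-(lam * u)) := by
    rw [← intervalIntegral.integral_const_mul]
    apply intervalIntegral.integral_congr
    intro s _
    simp only [mul_sub, Real.exp_sub, Real.exp_neg, div_eq_mul_inv]
    ring
  rw [h1, h3]
  have h4 : (∫ u in (0:ℝ)..t, u ^ (a - 1) * Real.exp (-(lam * u)))
      ≤ ∫ u in Ioi (0:ℝ), u ^ (a - 1) * Real.exp (-(lam * u)) := by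
    rw [intervalIntegral.integral_of_le ht]
    apply setIntegral_mono_set (expIntegrableOn ha0 hlam)
    · filter_upwards [self_mem_ae_restrict measurableSet_Ioi] with u hu
      exact mul_nonneg (Real.rpow_nonneg (le_of_lt hu) _) (Real.exp_pos _).le
    · exact HasSubset.Subset.eventuallyLE Ioc_subset_Ioi_self
  calc Real.exp (lam * t) * ∫ u in (0:ℝ)..t, u ^ (a - 1) * Real.exp (-(lam * u))
      ≤ Real.exp (lam * t) * ∫ u in Ioi (0:ℝ), u ^ (a - 1) * Real.exp (-(lam * u)) :=
        mul_le_mul_of_nonneg_left h4 (Real.exp_pos _).le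
    _ = Real.exp (lam * t) * (Real.Gamma a / lam ^ a) := by
        rw [expIntegralValue ha0 hlam]

end VolterraAux
open Real MeasureTheory Set

theorem stmt0 {d : ℕ} (α : ℝ) (hα : α ∈ Set.Ioo (0:ℝ) 1)
    (g : EuclideanSpace ℝ (Fin d) → EuclideanSpace ℝ (Fin d))
    (L : ℝ) (hL : 0 < L)
    (hg : ∀ x y : EuclideanSpace ℝ (Fin d), ‖g x - g y‖ ≤ L * ‖x - y‖)
    (T : ℝ) (hT : 0 < T)
    (f : ℝ → EuclideanSpace ℝ (Fin d)) (hf : ContinuousOn f (Set.Icc 0 T)) :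
    ∃ x : ℝ → EuclideanSpace ℝ (Fin d),
      (ContinuousOn x (Set.Icc 0 T) ∧
        ∀ t ∈ Set.Icc 0 T,
          x t = f t + (1 / Real.Gamma α) •
            ∫ s in (0:ℝ)..t, ((t - s) ^ (α - 1)) • g (x s)) ∧
      ∀ y : ℝ → EuclideanSpace ℝ (Fin d),
        ContinuousOn y (Set.Icc 0 T) →
        (∀ t ∈ Set.Icc 0 T,
          y t = f t + (1 / Real.Gamma α) •
            ∫ s in (0:ℝ)..t, ((t - s) ^ (α - 1)) • g (y s)) →
        ∀ t ∈ Set.Icc 0 T, y t = x t := by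
  obtain ⟨ha0, ha1⟩ := hα
  have hΓ : 0 < Real.Gamma α := Real.Gamma_pos_of_pos ha0
  have hgc : Continuous g := by
    have hlip : LipschitzWith (Real.toNNReal L) g := by
      apply LipschitzWith.of_dist_le_mul
      intro u v
      rw [dist_eq_norm, dist_eq_norm, Real.coe_toNNReal L hL.le]
      exact hg u v
    exact hlip.continuous
  set lam : ℝ := (2 * L) ^ (α⁻¹) with hlam_def
  have hlam : 0 < lam := Real.rpow_pos_of_pos (by linarith) _
  have hlam_pow : lam ^ α = 2 * L := by
    rw [hlam_def, ← Real.rpow_mul (by linarith : (0:ℝ) ≤ 2 * L),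
      inv_mul_cancel₀ (ne_of_gt ha0), Real.rpow_one]
  set prj : ℝ → Icc (0:ℝ) T := Set.projIcc 0 T hT.le with hprj_def
  have hprjc : Continuous prj := continuous_projIcc
  set ext : C(Icc (0:ℝ) T, EuclideanSpace ℝ (Fin d)) → ℝ → EuclideanSpace ℝ (Fin d) :=
    fun x s => Real.exp (lam * ((prj s : Icc (0:ℝ) T) : ℝ)) • x (prj s) with hext_def
  have hextc : ∀ x, Continuous (ext x) := fun x =>
    (Real.continuous_exp.comp (continuous_const.mul (continuous_subtype_val.comp hprjc))).smul
      (x.continuous.comp hprjc)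
  have hext_bdd : ∀ x, ∃ M, ∀ s : ℝ, ‖g (ext x s)‖ ≤ M := by
    intro x
    have hcq : Continuous (fun p : Icc (0:ℝ) T => ‖g (Real.exp (lam * (p:ℝ)) • x p)‖) := by
      apply Continuous.norm
      exact hgc.comp (((Real.continuous_exp.comp
        (continuous_const.mul continuous_subtype_val))).smul x.continuous)
    obtain ⟨C, hC⟩ := (isCompact_range hcq).bddAbove
    refine ⟨C, fun s => ?_⟩
    exact hC (Set.mem_range_self (prj s))
  set F : ℝ → EuclideanSpace ℝ (Fin d) := fun t => f ((prj t : Icc (0:ℝ) T) : ℝ) with hF_def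
  have hFc : Continuous F :=
    hf.comp_continuous (continuous_subtype_val.comp hprjc) (fun t => (prj t).2)
  set c : ℝ := 1 / Real.Gamma α with hc_def
  have hc0 : 0 ≤ c := by positivity
  set Φf : C(Icc (0:ℝ) T, EuclideanSpace ℝ (Fin d)) → ℝ → EuclideanSpace ℝ (Fin d) :=
    fun x t => Real.exp (-(lam * t)) •
      (F t + c • ∫ s in (0:ℝ)..t, ((t - s) ^ (α - 1)) • g (ext x s)) with hΦf_def
  have hΦfc : ∀ x, ContinuousOn (Φf x) (Icc 0 T) := by
    intro x
    obtain ⟨M, hM⟩ := hext_bdd x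
    have hint : ContinuousOn
        (fun t => ∫ s in (0:ℝ)..t, ((t - s) ^ (α - 1)) • g (ext x s)) (Icc 0 T) :=
      VolterraAux.contOn ha0 ha1
        (hgc.comp (hextc x) : Continuous fun s => g (ext x s)) hM hT
    exact ((Real.continuous_exp.comp (continuous_const.mul continuous_id).neg).continuousOn.smul
      (hFc.continuousOn.add (hint.const_smul c)))
  set Φ : C(Icc (0:ℝ) T, EuclideanSpace ℝ (Fin d)) → C(Icc (0:ℝ) T, EuclideanSpace ℝ (Fin d)) :=
    fun x => ContinuousMap.mk ((Icc (0:ℝ) T).restrict (Φf x))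
      (continuousOn_iff_continuous_restrict.mp (hΦfc x)) with hΦ_def
  have hΦ_apply : ∀ x p, Φ x p = Φf x (p : ℝ) := fun x p => rfl
  have hIx : ∀ x t, IntervalIntegrable
      (fun s => ((t - s) ^ (α - 1)) • g (ext x s)) volume 0 t := by
    intro x t
    obtain ⟨M, hM⟩ := hext_bdd x
    exact VolterraAux.smulIntegrable ha0
      (hgc.comp (hextc x) : Continuous fun s => g (ext x s)) hM t
  have hdist_pt : ∀ x y : C(Icc (0:ℝ) T, EuclideanSpace ℝ (Fin d)), ∀ p : Icc (0:ℝ) T,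
      dist (Φ x p) (Φ y p) ≤ (1/2) * dist x y := by
    intro x y p
    obtain ⟨t, ht⟩ := p
    set D := dist x y with hD
    have hD0 : 0 ≤ D := dist_nonneg
    have e1 : (∫ s in (0:ℝ)..t, ((t - s) ^ (α - 1)) • g (ext x s))
        - (∫ s in (0:ℝ)..t, ((t - s) ^ (α - 1)) • g (ext y s))
        = ∫ s in (0:ℝ)..t, ((t - s) ^ (α - 1)) • (g (ext x s) - g (ext y s)) := by
      rw [← intervalIntegral.integral_sub (hIx x t) (hIx y t)]
      apply intervalIntegral.integral_congr
      intro s _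
      dsimp only
      rw [smul_sub]
    have hsub : Φf x t - Φf y t = Real.exp (-(lam * t)) • (c •
        ∫ s in (0:ℝ)..t, ((t - s) ^ (α - 1)) • (g (ext x s) - g (ext y s))) := by
      rw [hΦf_def]
      dsimp only
      rw [← smul_sub, add_sub_add_left_eq_sub, ← smul_sub, e1]
    have hbnd_int : IntervalIntegrable
        (fun s => (t - s) ^ (α - 1) * (L * Real.exp (lam * s) * D)) volume 0 t := by
      apply (VolterraAux.kernelIntegrable ha0 t).mul_continuousOn
      exact (((continuous_const.mul (Real.continuous_exp.comp
        (continuous_const.mul continuous_id))).mul continuous_const)).continuousOn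
    have hle : ‖∫ s in (0:ℝ)..t, ((t - s) ^ (α - 1)) • (g (ext x s) - g (ext y s))‖
        ≤ |∫ s in (0:ℝ)..t, (t - s) ^ (α - 1) * (L * Real.exp (lam * s) * D)| := by
      apply intervalIntegral.norm_integral_le_abs_of_norm_le ?_ hbnd_int
      filter_upwards [ae_restrict_mem measurableSet_uIoc] with s hs
      rw [Set.uIoc_of_le ht.1] at hs
      have hsT : s ∈ Icc (0:ℝ) T := ⟨hs.1.le, hs.2.trans ht.2⟩
      have hprjs : prj s = ⟨s, hsT⟩ := Set.projIcc_of_mem hT.le hsT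
      have hknn : (0:ℝ) ≤ (t - s) ^ (α - 1) := Real.rpow_nonneg (sub_nonneg.mpr hs.2) _
      have hgd : ‖g (ext x s) - g (ext y s)‖ ≤ L * Real.exp (lam * s) * D := by
        calc ‖g (ext x s) - g (ext y s)‖ ≤ L * ‖ext x s - ext y s‖ := hg _ _
          _ = L * (Real.exp (lam * s) * ‖x ⟨s, hsT⟩ - y ⟨s, hsT⟩‖) := by
              rw [hext_def]
              dsimp only
              rw [hprjs, ← smul_sub, norm_smul, Real.norm_eq_abs,
                abs_of_nonneg (Real.exp_pos _).le]
          _ ≤ L * (Real.exp (lam * s) * D) := by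
              have hdd := ContinuousMap.dist_apply_le_dist (f := x) (g := y) ⟨s, hsT⟩
              rw [dist_eq_norm] at hdd
              have := mul_le_mul_of_nonneg_left hdd (Real.exp_pos (lam * s)).le
              exact mul_le_mul_of_nonneg_left this hL.le
          _ = L * Real.exp (lam * s) * D := by ring
      rw [norm_smul, Real.norm_eq_abs, abs_of_nonneg hknn]
      exact mul_le_mul_of_nonneg_left hgd hknn
    have habs : |∫ s in (0:ℝ)..t, (t - s) ^ (α - 1) * (L * Real.exp (lam * s) * D)|
        = ∫ s in (0:ℝ)..t, (t - s) ^ (α - 1) * (L * Real.exp (lam * s) * D) := by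
      apply abs_of_nonneg
      apply intervalIntegral.integral_nonneg ht.1
      intro u hu
      have : (0:ℝ) ≤ (t - u) ^ (α - 1) := Real.rpow_nonneg (sub_nonneg.mpr hu.2) _
      positivity
    have hIbnd : (∫ s in (0:ℝ)..t, (t - s) ^ (α - 1) * (L * Real.exp (lam * s) * D))
        ≤ (L * D) * (Real.exp (lam * t) * (Real.Gamma α / lam ^ α)) := by
      have e2 : (∫ s in (0:ℝ)..t, (t - s) ^ (α - 1) * (L * Real.exp (lam * s) * D))
          = (L * D) * ∫ s in (0:ℝ)..t, (t - s) ^ (α - 1) * Real.exp (lam * s) := by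
        rw [← intervalIntegral.integral_const_mul]
        apply intervalIntegral.integral_congr
        intro s _
        dsimp only
        ring
      rw [e2]
      exact mul_le_mul_of_nonneg_left (VolterraAux.gammaBound ha0 hlam ht.1) (by positivity)
    have hfinal : Real.exp (-(lam * t)) * (c *
        ((L * D) * (Real.exp (lam * t) * (Real.Gamma α / lam ^ α)))) = (1/2) * D := by
      rw [hlam_pow, hc_def, Real.exp_neg]
      field_simp
    calc dist (Φ x ⟨t, ht⟩) (Φ y ⟨t, ht⟩) = ‖Φf x t - Φf y t‖ := by
          rw [hΦ_apply, hΦ_apply, dist_eq_norm]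
      _ = Real.exp (-(lam * t)) * (c *
            ‖∫ s in (0:ℝ)..t, ((t - s) ^ (α - 1)) • (g (ext x s) - g (ext y s))‖) := by
          rw [hsub, norm_smul, norm_smul, Real.norm_eq_abs,
            abs_of_nonneg (Real.exp_pos _).le, Real.norm_eq_abs, abs_of_nonneg hc0]
      _ ≤ Real.exp (-(lam * t)) * (c *
            ((L * D) * (Real.exp (lam * t) * (Real.Gamma α / lam ^ α)))) := by
          apply mul_le_mul_of_nonneg_left _ (Real.exp_pos _).le
          apply mul_le_mul_of_nonneg_left _ hc0
          exact le_trans hle (le_of_eq_of_le habs hIbnd)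
      _ = (1/2) * D := hfinal
  have hLip : LipschitzWith (1/2 : NNReal) Φ := by
    apply LipschitzWith.of_dist_le_mul
    intro x y
    have hhalf : ((1/2 : NNReal) : ℝ) = (1/2 : ℝ) := by norm_num
    rw [hhalf]
    rw [ContinuousMap.dist_le (by positivity)]
    intro p
    exact hdist_pt x y p
  have hcontr : ContractingWith (1/2 : NNReal) Φ :=
    ⟨by rw [← NNReal.coe_lt_coe]; norm_num, hLip⟩
  have hne : Nonempty C(Icc (0:ℝ) T, EuclideanSpace ℝ (Fin d)) := ⟨0⟩
  set xstar := ContractingWith.fixedPoint Φ hcontr with hxstar_def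
  have hfix : Φ xstar = xstar := hcontr.fixedPoint_isFixedPt
  have hprj_mem : ∀ t (ht : t ∈ Icc (0:ℝ) T), prj t = ⟨t, ht⟩ :=
    fun t ht => Set.projIcc_of_mem hT.le ht
  refine ⟨ext xstar, ⟨(hextc xstar).continuousOn, ?_⟩, ?_⟩
  · intro t ht
    have h1 : Φf xstar t = xstar ⟨t, ht⟩ := by
      have h2 := ContinuousMap.congr_fun hfix ⟨t, ht⟩
      rwa [hΦ_apply] at h2
    have h2 : ext xstar t = Real.exp (lam * t) • xstar ⟨t, ht⟩ := by
      rw [hext_def]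
      dsimp only
      rw [hprj_mem t ht]
    have hFt : F t = f t := by
      rw [hF_def]
      dsimp only
      rw [hprj_mem t ht]
    rw [h2, ← h1, hΦf_def]
    dsimp only
    rw [smul_smul, ← Real.exp_add, add_neg_cancel, Real.exp_zero, one_smul, hFt]
  · intro y hyc hyeq t ht
    have hyrc : Continuous ((Icc (0:ℝ) T).restrict y) :=
      continuousOn_iff_continuous_restrict.mp hyc
    set ystar : C(Icc (0:ℝ) T, EuclideanSpace ℝ (Fin d)) :=
      ContinuousMap.mk (fun p => Real.exp (-(lam * (p : ℝ))) • y (p : ℝ))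
        ((Real.continuous_exp.comp (continuous_const.mul continuous_subtype_val).neg).smul
          hyrc) with hystar_def
    have hext_y : ∀ s : ℝ, ext ystar s = y ((prj s : Icc (0:ℝ) T) : ℝ) := by
      intro s
      rw [hext_def]
      dsimp only
      show Real.exp (lam * ((prj s : Icc (0:ℝ) T) : ℝ)) •
        (Real.exp (-(lam * ((prj s : Icc (0:ℝ) T) : ℝ))) • y ((prj s : Icc (0:ℝ) T) : ℝ)) = _
      rw [smul_smul, ← Real.exp_add, add_neg_cancel, Real.exp_zero, one_smul]
    have hyfix : Φ ystar = ystar := by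
      apply ContinuousMap.ext
      rintro ⟨t', ht'⟩
      show Φf ystar t' = Real.exp (-(lam * t')) • y t'
      have hFt : F t' = f t' := by
        rw [hF_def]
        dsimp only
        rw [hprj_mem t' ht']
      have hint_eq : (∫ s in (0:ℝ)..t', ((t' - s) ^ (α - 1)) • g (ext ystar s))
          = ∫ s in (0:ℝ)..t', ((t' - s) ^ (α - 1)) • g (y s) := by
        apply intervalIntegral.integral_congr
        intro s hs
        rw [Set.uIcc_of_le ht'.1] at hs
        have hsT : s ∈ Icc (0:ℝ) T := ⟨hs.1, hs.2.trans ht'.2⟩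
        dsimp only
        rw [hext_y s, hprj_mem s hsT]
      rw [hΦf_def]
      dsimp only
      rw [hFt, hint_eq, ← hyeq t' ht']
    have hyx : ystar = xstar := hcontr.fixedPoint_unique hyfix
    have hy_t : y t = Real.exp (lam * t) • ystar ⟨t, ht⟩ := by
      show y t = Real.exp (lam * t) • (Real.exp (-(lam * t)) • y t)
      rw [smul_smul, ← Real.exp_add, add_neg_cancel, Real.exp_zero, one_smul]
    rw [hy_t, hyx, hext_def]
    dsimp only
    rw [hprj_mem t ht]
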